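/- Let σ: ℝ → ℝ satisfy |σ(t)| ≤ ρ₁e^{ρ₂t} for t < 0 and |σ(t)| ≤ ρ₃t + ρ₄ for t ≥ 0 (with ρ₁,ρ₂,ρ₃,ρ₄ > 0), and let β ∈ ℝ with σ(β) ≠ 0. Let c_1 < c_2 < ... < c_N. Define the N×N matrix E(α) with entries E(α)_{ij} = σ(α(c_j − c_i) + β) for j ∈ [N−1], and E(α)_{iN} = 1. Then det(E(α)) → ±σ(β)^{N−1} ≠ 0 as α → +∞; in particular E(α) is invertible for all sufficiently large α. -/

import Mathlib

open Filter

lemma stmt_8_aux_exists_lt {N : ℕ} (π : Equiv.Perm (Fin N)) (hπ : π ≠ 1) :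
    ∃ i, i < π i := by
  classical
  have h : ∃ j, π j ≠ j := by
    by_contra h
    push_neg at h
    exact hπ (Equiv.ext h)
  obtain ⟨j, hj⟩ := h
  set s : Finset (Fin N) := Finset.univ.filter (fun i => π i ≠ i) with hs
  have hne : s.Nonempty := ⟨j, by simp [hs, hj]⟩
  set i := s.min' hne with hi
  have hmem : π i ≠ i := by
    have := s.min'_mem hne
    simpa [hs] using this
  rcases lt_or_gt_of_ne hmem with h1 | h1
  · exfalso
    have hmem2 : π (π i) ≠ π i := fun h => hmem (π.injective h)
    have : i ≤ π i := s.min'_le _ (by simp [hs, hmem2])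
    exact absurd h1 (not_lt.mpr this)
  · exact ⟨i, h1⟩

/-- Let `σ` satisfy `|σ(t)| ≤ ρ₁ e^{ρ₂ t}` for `t < 0` and `|σ(t)| ≤ ρ₃ t + ρ₄` for
`t ≥ 0`, with `σ(β) ≠ 0`, and let `c_1 < ⋯ < c_N`. Define `E(α)` with entries
`σ(α (c_j - c_i) + β)` in the first `N-1` columns and all ones in the last column.
Then `det E(α) → σ(β)^{N-1} ≠ 0` as `α → ∞`; in particular `E(α)` is invertible
for all sufficiently large `α`. -/
theorem stmt_8 (N : ℕ) (hN : 2 ≤ N) (σ : ℝ → ℝ)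
    (ρ₁ ρ₂ ρ₃ ρ₄ : ℝ) (hρ₁ : 0 < ρ₁) (hρ₂ : 0 < ρ₂) (hρ₃ : 0 < ρ₃) (hρ₄ : 0 < ρ₄)
    (hneg : ∀ t : ℝ, t < 0 → |σ t| ≤ ρ₁ * Real.exp (ρ₂ * t))
    (hpos : ∀ t : ℝ, 0 ≤ t → |σ t| ≤ ρ₃ * t + ρ₄)
    (β : ℝ) (hβ : σ β ≠ 0)
    (c : Fin N → ℝ) (hc : StrictMono c)
    (E : ℝ → Matrix (Fin N) (Fin N) ℝ)
    (hE : ∀ (α : ℝ) (i j : Fin N), E α i j =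
      if j.val = N - 1 then 1 else σ (α * (c j - c i) + β)) :
    Tendsto (fun α : ℝ => (E α).det) atTop (nhds (σ β ^ (N - 1))) ∧
    σ β ^ (N - 1) ≠ 0 ∧
    ∃ α₀ : ℝ, ∀ α : ℝ, α₀ ≤ α → IsUnit (E α) := by
  classical
  set n := N - 1 with hn
  have hn1 : 1 ≤ n := by omega
  set bot : Fin N := ⟨0, by omega⟩ with hbot
  set top : Fin N := ⟨N - 1, by omega⟩ with htop
  set K := c top - c bot with hKdef
  have hK : 0 ≤ K := sub_nonneg.mpr (hc.monotone (show bot ≤ top by show (0:ℕ) ≤ N - 1; omega))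
  set B := ρ₁ + ρ₃ * |β| + ρ₄ + 1 with hBdef
  have hβabs : (0:ℝ) ≤ ρ₃ * |β| := by positivity
  have hB1 : (1:ℝ) ≤ B := by simp only [hBdef]; linarith
  have hcle : ∀ i j : Fin N, c j - c i ≤ K := by
    intro i j
    have h1 : c j ≤ c top := hc.monotone (show j ≤ top by show j.val ≤ N - 1; omega)
    have h2 : c bot ≤ c i := hc.monotone (show bot ≤ i by show (0:ℕ) ≤ i.val; omega)
    simp only [hKdef]; linarith
  -- uniform entry bound for α ≥ 0
  have hentry : ∀ α : ℝ, 0 ≤ α → ∀ i j : Fin N, |E α i j| ≤ B + ρ₃ * K * α := by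
    intro α hα i j
    have hKα : (0:ℝ) ≤ ρ₃ * K * α := by positivity
    rw [hE]
    split
    · rw [abs_one]; linarith
    · set t := α * (c j - c i) + β with ht
      rcases lt_or_ge t 0 with htn | htp
      · have h1 := hneg t htn
        have h2 : Real.exp (ρ₂ * t) ≤ 1 := by
          rw [Real.exp_le_one_iff]
          nlinarith
        nlinarith [hρ₁.le]
      · have h1 := hpos t htp
        have h2 : α * (c j - c i) ≤ α * K := mul_le_mul_of_nonneg_left (hcle i j) hα
        have h3 : β ≤ |β| := le_abs_self β
        have h4 : t ≤ α * K + |β| := by rw [ht]; linarith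
        nlinarith [mul_le_mul_of_nonneg_left h4 hρ₃.le]
  set F : Equiv.Perm (Fin N) → ℝ → ℝ :=
    fun π α => ((Equiv.Perm.sign π : ℤ) : ℝ) * ∏ i, E α (π i) i with hF
  have hdet : ∀ α, (E α).det = ∑ π : Equiv.Perm (Fin N), F π α := fun α =>
    Matrix.det_apply' (E α)
  -- identity term
  have hid : ∀ α : ℝ, F 1 α = σ β ^ n := by
    intro α
    have h1 : ∀ i : Fin N, E α i i = if i.val = N - 1 then 1 else σ β := by
      intro i
      rw [hE]; simp [hn]
    simp only [hF, Equiv.Perm.sign_one, Units.val_one, Int.cast_one, one_mul,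
      Equiv.Perm.one_apply]
    rw [Finset.prod_congr rfl (fun i _ => h1 i), Finset.prod_ite]
    have hcard1 : (Finset.univ.filter (fun i : Fin N => i.val = N - 1)).card = 1 := by
      rw [Finset.card_eq_one]
      refine ⟨top, ?_⟩
      ext x
      simp [htop, Fin.ext_iff]
    have hcard2 : (Finset.univ.filter (fun i : Fin N => ¬ i.val = N - 1)).card = n := by
      have := Finset.card_filter_add_card_filter_not
        (s := (Finset.univ : Finset (Fin N))) (p := fun i : Fin N => i.val = N - 1)
      simp only [Finset.card_univ, Fintype.card_fin] at this
      omega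
    simp [hcard2, Finset.prod_const]
  have hne0 : σ β ^ (N - 1) ≠ 0 := pow_ne_zero _ hβ
  -- non-identity terms tend to zero
  have hzero : ∀ π : Equiv.Perm (Fin N), π ≠ 1 →
      Tendsto (fun α => F π α) atTop (nhds 0) := by
    intro π hπ
    obtain ⟨i₀, hi₀⟩ := stmt_8_aux_exists_lt π hπ
    set d := c (π i₀) - c i₀ with hd
    have hdpos : 0 < d := sub_pos.mpr (hc hi₀)
    set a := ρ₂ * d with ha'
    have ha : 0 < a := mul_pos hρ₂ hdpos
    set M := B + ρ₃ * K with hMdef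
    have hM : 0 < M := by
      have := mul_nonneg hρ₃.le hK
      simp only [hMdef]; linarith
    set C := ρ₁ * Real.exp (ρ₂ * β) * (M / a) ^ n with hC
    have hi₀v : ¬ (i₀.val = N - 1) := by
      have h1 : (i₀ : ℕ) < (π i₀ : ℕ) := hi₀
      have h2 : ((π i₀ : Fin N) : ℕ) < N := (π i₀).isLt
      omega
    apply squeeze_zero_norm' (a := fun α => C * ((a * α) ^ n * Real.exp (-(a * α))))
    · filter_upwards [eventually_ge_atTop (max 1 (β / d + 1))] with α hα
      have hα1 : (1:ℝ) ≤ α := le_trans (le_max_left _ _) hα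
      have hα0 : (0:ℝ) ≤ α := by linarith
      have hαβ : β / d + 1 ≤ α := le_trans (le_max_right _ _) hα
      have hβd : β < α * d := by
        have : β / d < α := by linarith
        calc β = (β / d) * d := by field_simp
        _ < α * d := by exact mul_lt_mul_of_pos_right this hdpos
      -- the special factor
      set t := α * (c i₀ - c (π i₀)) + β with ht
      have htval : t = β - α * d := by rw [ht, hd]; ring
      have htneg : t < 0 := by rw [htval]; linarith
      have hfac : E α (π i₀) i₀ = σ t := by rw [hE]; simp [hi₀v, hn, ht]
      have hfacle : |E α (π i₀) i₀| ≤ ρ₁ * Real.exp (ρ₂ * β) * Real.exp (-(a * α)) := by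
        rw [hfac]
        have h1 := hneg t htneg
        have h2 : ρ₂ * t = ρ₂ * β + -(a * α) := by rw [htval, ha']; ring
        rw [h2, Real.exp_add] at h1
        linarith [h1]
      -- the remaining factors
      have hP1 : (0:ℝ) < B + ρ₃ * K * α := by
        have := mul_nonneg (mul_nonneg hρ₃.le hK) hα0
        linarith
      have hrest : ∏ i ∈ Finset.univ.erase i₀, |E α (π i) i| ≤ (B + ρ₃ * K * α) ^ n := by
        have h1 : ∏ i ∈ Finset.univ.erase i₀, |E α (π i) i| ≤
            ∏ _i ∈ Finset.univ.erase i₀, (B + ρ₃ * K * α) := by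
          apply Finset.prod_le_prod (fun i _ => abs_nonneg _)
            (fun i _ => hentry α hα0 (π i) i)
        rwa [Finset.prod_const, Finset.card_erase_of_mem (Finset.mem_univ i₀),
          Finset.card_univ, Fintype.card_fin] at h1
      have hsplit : ∏ i : Fin N, |E α (π i) i| =
          |E α (π i₀) i₀| * ∏ i ∈ Finset.univ.erase i₀, |E α (π i) i| :=
        (Finset.mul_prod_erase Finset.univ _ (Finset.mem_univ i₀)).symm
      have hnorm : ‖F π α‖ = ∏ i : Fin N, |E α (π i) i| := by
        rw [Real.norm_eq_abs, hF, abs_mul, Finset.abs_prod]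
        rcases Int.units_eq_one_or (Equiv.Perm.sign π) with h | h <;> simp [h]
      have hMα : (B + ρ₃ * K * α) ^ n ≤ (M * α) ^ n := by
        apply pow_le_pow_left₀ hP1.le
        have h1 : B ≤ B * α := le_mul_of_one_le_right (by linarith) hα1
        have h2 : M * α = B * α + ρ₃ * K * α := by simp only [hMdef]; ring
        linarith
      have hMaeq : (M * α) ^ n = (M / a) ^ n * (a * α) ^ n := by
        rw [← mul_pow]
        congr 1
        field_simp
      have hbound : ‖F π α‖ ≤
          (ρ₁ * Real.exp (ρ₂ * β) * Real.exp (-(a * α))) * (M * α) ^ n := by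
        rw [hnorm, hsplit]
        apply mul_le_mul hfacle (hrest.trans hMα)
          (Finset.prod_nonneg fun i _ => abs_nonneg _) (by positivity)
      calc ‖F π α‖ ≤ (ρ₁ * Real.exp (ρ₂ * β) * Real.exp (-(a * α))) * (M * α) ^ n :=
            hbound
        _ = C * ((a * α) ^ n * Real.exp (-(a * α))) := by rw [hC, hMaeq]; ring
    · have h3 : Tendsto (fun α : ℝ => a * α) atTop atTop :=
        Tendsto.const_mul_atTop ha tendsto_id
      have h1 : Tendsto (fun α : ℝ => (a * α) ^ n * Real.exp (-(a * α))) atTop (nhds 0) :=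
        (Real.tendsto_pow_mul_exp_neg_atTop_nhds_zero n).comp h3
      have h2 := h1.const_mul C
      simpa using h2
  -- assemble the limit
  have hsum : Tendsto (fun α => ∑ π : Equiv.Perm (Fin N), F π α) atTop
      (nhds (∑ π : Equiv.Perm (Fin N), if π = 1 then σ β ^ n else 0)) := by
    apply tendsto_finset_sum
    intro π _
    by_cases hπ : π = 1
    · subst hπ
      have h : F 1 = fun _ => σ β ^ n := funext hid
      rw [if_pos rfl, h]
      exact tendsto_const_nhds
    · simp only [if_neg hπ]
      exact hzero π hπ
  have hsumval : (∑ π : Equiv.Perm (Fin N), if π = 1 then σ β ^ n else 0) = σ β ^ n := by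
    rw [Finset.sum_ite_eq' Finset.univ (1 : Equiv.Perm (Fin N)) (fun _ => σ β ^ n)]
    simp
  have hTend : Tendsto (fun α : ℝ => (E α).det) atTop (nhds (σ β ^ (N - 1))) := by
    have : (fun α : ℝ => (E α).det) = fun α => ∑ π : Equiv.Perm (Fin N), F π α :=
      funext hdet
    rw [this, show σ β ^ (N - 1) = σ β ^ n from rfl, ← hsumval]
    exact hsum
  refine ⟨hTend, hne0, ?_⟩
  have hev : ∀ᶠ α in atTop, (E α).det ≠ 0 := hTend.eventually_ne hne0
  obtain ⟨α₀, hα₀⟩ := eventually_atTop.mp hev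
  refine ⟨α₀, fun α hα => ?_⟩
  rw [Matrix.isUnit_iff_isUnit_det]
  exact isUnit_iff_ne_zero.mpr (hα₀ α hα)
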